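/- arXiv:2104.05350 — 10 statements merged into one kernel-verified Lean document; each statement's English description precedes it below -/
import Mathlib

section
/- Let I and J be finite index sets, T : J × I → ℝ a left stochastic matrix (all entries nonnegative, each column sums to 1), p : I → (0,1] a probability distribution with all p_i > 0, p⁰ : I → (0,1) a probability distribution with all entries positive, and p̃ : J → [0,1] a probability distribution. Define q⁰_j := ∑_i T_{ji} p⁰_i, and assume q⁰_j > 0 for all j. Then the 'general J-equation' holds: ∑_{i,j} T_{ji} p_i · (p⁰_i · p̃_j) / (q⁰_j · p_i) = 1. -/
open Finset

/-- General J-equation. -/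
theorem general_J_equation {I J : Type*} [Fintype I] [Fintype J]
    (T : J → I → ℝ) (p p0 : I → ℝ) (pt : J → ℝ)
    (hT0 : ∀ j i, 0 ≤ T j i) (hT1 : ∀ i, ∑ j, T j i = 1)
    (hp : ∀ i, 0 < p i ∧ p i ≤ 1) (hpsum : ∑ i, p i = 1)
    (hp0 : ∀ i, 0 < p0 i ∧ p0 i < 1) (hp0sum : ∑ i, p0 i = 1)
    (hpt : ∀ j, 0 ≤ pt j ∧ pt j ≤ 1) (hptsum : ∑ j, pt j = 1)
    (q0 : J → ℝ) (hq0def : ∀ j, q0 j = ∑ i, T j i * p0 i)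
    (hq0pos : ∀ j, 0 < q0 j) :
    ∑ i, ∑ j, T j i * p i * (p0 i * pt j) / (q0 j * p i) = 1 := by
  have key : ∀ i j, T j i * p i * (p0 i * pt j) / (q0 j * p i)
      = T j i * p0 i * (pt j / q0 j) := by
    intro i j
    have hpi := (hp i).1.ne'
    have hqj := (hq0pos j).ne'
    field_simp
  calc ∑ i, ∑ j, T j i * p i * (p0 i * pt j) / (q0 j * p i)
      = ∑ j, ∑ i, T j i * p0 i * (pt j / q0 j) := by
        rw [Finset.sum_comm]
        exact Finset.sum_congr rfl fun j _ => Finset.sum_congr rfl fun i _ => key i j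
    _ = ∑ j, pt j := by
        refine Finset.sum_congr rfl fun j _ => ?_
        rw [← Finset.sum_mul, ← hq0def j]
        rw [← mul_div_assoc]
        exact mul_div_cancel_left₀ _ (hq0pos j).ne'
    _ = 1 := hptsum
end

section
/- Let N be a finite index set, E : N → ℝ energies, d : N → ℕ positive degeneracies, β₀ ∈ ℝ, and let p⁰_n = d_n e^{-β₀ E_n} / Z₀ with Z₀ = ∑_n d_n e^{-β₀ E_n} be the Gibbs distribution at inverse temperature β₀. Let T be a left stochastic N × N matrix satisfying T p⁰ = p⁰ (a 'Gibbs matrix'). For any β ∈ ℝ, let p be the Gibbs distribution at inverse temperature β. Then the Jarzynski-type equation ∑_{m,n} T_{mn} p_n · e^{-(β - β₀)(E_m - E_n)} = 1 holds. -/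
open Finset Real

/-- Jarzynski-type equation for a Gibbs matrix. -/
theorem jarzynski_type_equation {N : Type*} [Fintype N] [Nonempty N]
    (E : N → ℝ) (d : N → ℕ) (hd : ∀ n, 0 < d n) (β₀ β : ℝ)
    (T : N → N → ℝ) (hT0 : ∀ m n, 0 ≤ T m n) (hT1 : ∀ n, ∑ m, T m n = 1)
    (p0 p : N → ℝ)
    (hp0 : ∀ n, p0 n = (d n : ℝ) * Real.exp (-β₀ * E n) /
      (∑ k, (d k : ℝ) * Real.exp (-β₀ * E k)))
    (hp : ∀ n, p n = (d n : ℝ) * Real.exp (-β * E n) /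
      (∑ k, (d k : ℝ) * Real.exp (-β * E k)))
    (hfix : ∀ m, ∑ n, T m n * p0 n = p0 m) :
    ∑ m, ∑ n, T m n * p n * Real.exp (-(β - β₀) * (E m - E n)) = 1 := by
  set Z0 : ℝ := ∑ k, (d k : ℝ) * Real.exp (-β₀ * E k) with hZ0
  set Z : ℝ := ∑ k, (d k : ℝ) * Real.exp (-β * E k) with hZ
  have hZ0pos : 0 < Z0 := Finset.sum_pos
    (fun k _ => mul_pos (by exact_mod_cast hd k) (Real.exp_pos _)) Finset.univ_nonempty
  have hZpos : 0 < Z := Finset.sum_pos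
    (fun k _ => mul_pos (by exact_mod_cast hd k) (Real.exp_pos _)) Finset.univ_nonempty
  have key : ∀ m n, T m n * p n * Real.exp (-(β - β₀) * (E m - E n))
      = Real.exp (-(β - β₀) * E m) * Z0 / Z * (T m n * p0 n) := by
    intro m n
    rw [hp, hp0]
    have h : Real.exp (-β * E n) * Real.exp (-(β - β₀) * (E m - E n))
        = Real.exp (-(β - β₀) * E m) * Real.exp (-β₀ * E n) := by
      rw [← Real.exp_add, ← Real.exp_add]; ring_nf
    field_simp
    ring_nf
    ring_nf at h
    linear_combination (T m n * (d n : ℝ)) * h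
  calc ∑ m, ∑ n, T m n * p n * Real.exp (-(β - β₀) * (E m - E n))
      = ∑ m, Real.exp (-(β - β₀) * E m) * Z0 / Z * (∑ n, T m n * p0 n) := by
        refine Finset.sum_congr rfl fun m _ => ?_
        rw [Finset.mul_sum]
        exact Finset.sum_congr rfl fun n _ => key m n
    _ = ∑ m, (d m : ℝ) * Real.exp (-β * E m) / Z := by
        refine Finset.sum_congr rfl fun m _ => ?_
        rw [hfix, hp0]
        have h2 : Real.exp (β₀ * E m - β * E m) * Real.exp (-(β₀ * E m))
            = Real.exp (-(β * E m)) := by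
          rw [← Real.exp_add]; ring_nf
        field_simp
        ring_nf
        linear_combination (norm := ring_nf) ((d m : ℝ)) * h2
    _ = 1 := by rw [← Finset.sum_div, ← hZ, div_self hZpos.ne']
end

section
/- Let N be a finite index set, E : N → ℝ, d : N → ℕ positive, β₀ ∈ ℝ, p⁰ the Gibbs distribution at inverse temperature β₀, and T a left stochastic matrix with T p⁰ = p⁰. Let p be the Gibbs distribution at inverse temperature β. Then (β − β₀) · ⟨ΔQ⟩ ≥ 0, where ⟨ΔQ⟩ = ∑_{m,n} T_{mn} p_n (E_m − E_n). In particular, on average heat flows from the hotter to the colder system. -/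
open Finset Real

private lemma heat_aux (A B C D : ℝ) (hA : A ≠ 0) (hB : B ≠ 0) (hC : C ≠ 0) (hD : D ≠ 0) :
    B * (1 - (A * B / (C * D))⁻¹) = B - D * C / A := by
  field_simp

/-- Heat flows on average from the hotter to the colder system. -/
theorem heat_flow_direction {N : Type*} [Fintype N] [Nonempty N]
    (E : N → ℝ) (d : N → ℕ) (hd : ∀ n, 0 < d n) (β₀ β : ℝ)
    (T : N → N → ℝ) (hT0 : ∀ m n, 0 ≤ T m n) (hT1 : ∀ n, ∑ m, T m n = 1)
    (p0 p : N → ℝ)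
    (hp0 : ∀ n, p0 n = (d n : ℝ) * Real.exp (-β₀ * E n) /
      (∑ k, (d k : ℝ) * Real.exp (-β₀ * E k)))
    (hp : ∀ n, p n = (d n : ℝ) * Real.exp (-β * E n) /
      (∑ k, (d k : ℝ) * Real.exp (-β * E k)))
    (hfix : ∀ m, ∑ n, T m n * p0 n = p0 m) :
    0 ≤ (β - β₀) * ∑ m, ∑ n, T m n * p n * (E m - E n) := by
  set a : N → ℝ := fun n => (d n : ℝ) * Real.exp (-β₀ * E n) with ha
  set b : N → ℝ := fun n => (d n : ℝ) * Real.exp (-β * E n) with hb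
  have hapos : ∀ n, 0 < a n := fun n =>
    mul_pos (by exact_mod_cast hd n) (Real.exp_pos _)
  have hbpos : ∀ n, 0 < b n := fun n =>
    mul_pos (by exact_mod_cast hd n) (Real.exp_pos _)
  have hZ0 : 0 < ∑ k, a k := Finset.sum_pos (fun k _ => hapos k) Finset.univ_nonempty
  have hZb : 0 < ∑ k, b k := Finset.sum_pos (fun k _ => hbpos k) Finset.univ_nonempty
  -- T fixes the unnormalized Gibbs weights a
  have hfixa : ∀ m, ∑ n, T m n * a n = a m := by
    intro m
    have h2 : ∑ n, T m n * (a n / (∑ k, a k)) = a m / (∑ k, a k) := by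
      have h := hfix m
      simp only [hp0] at h
      exact h
    have h3 := congrArg (· * (∑ k, a k)) h2
    simp only [Finset.sum_mul] at h3
    have h4 : ∀ n, T m n * (a n / (∑ k, a k)) * (∑ k, a k) = T m n * a n := by
      intro n; rw [mul_assoc, div_mul_cancel₀ _ hZ0.ne']
    rw [Finset.sum_congr rfl (fun n _ => h4 n), div_mul_cancel₀ _ hZ0.ne'] at h3
    exact h3
  -- log identity
  have hlog : ∀ m, Real.log (a m) - Real.log (b m) = (β - β₀) * E m := by
    intro m
    have hdm : ((d m : ℝ)) ≠ 0 := by exact_mod_cast (hd m).ne'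
    rw [ha, hb]
    simp only [Real.log_mul hdm (Real.exp_ne_zero _), Real.log_exp]
    ring
  -- pointwise inequality
  have key : ∀ m n, T m n * b n - T m n * (b m * a n / a m) ≤
      T m n * b n * ((β - β₀) * (E m - E n)) := by
    intro m n
    have hx : 0 < a m * b n / (a n * b m) :=
      div_pos (mul_pos (hapos m) (hbpos n)) (mul_pos (hapos n) (hbpos m))
    have hlogx : Real.log (a m * b n / (a n * b m)) = (β - β₀) * (E m - E n) := by
      rw [Real.log_div (mul_pos (hapos m) (hbpos n)).ne' (mul_pos (hapos n) (hbpos m)).ne',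
        Real.log_mul (hapos m).ne' (hbpos n).ne',
        Real.log_mul (hapos n).ne' (hbpos m).ne']
      have h1 := hlog m
      have h2 := hlog n
      nlinarith [h1, h2]
    have hineq : 1 - (a m * b n / (a n * b m))⁻¹ ≤ Real.log (a m * b n / (a n * b m)) := by
      have := Real.log_le_sub_one_of_pos (inv_pos.mpr hx)
      rw [Real.log_inv] at this
      linarith
    have hbn := (hbpos n).le
    have h5 : b n * (1 - (a m * b n / (a n * b m))⁻¹) ≤
        b n * Real.log (a m * b n / (a n * b m)) :=
      mul_le_mul_of_nonneg_left hineq hbn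
    have h6 : b n * (1 - (a m * b n / (a n * b m))⁻¹) = b n - b m * a n / a m := by
      have := heat_aux (a m) (b n) (a n) (b m) (hapos m).ne' (hbpos n).ne'
        (hapos n).ne' (hbpos m).ne'
      linarith [this]
    rw [h6, hlogx] at h5
    have := mul_le_mul_of_nonneg_left h5 (hT0 m n)
    calc T m n * b n - T m n * (b m * a n / a m)
        = T m n * (b n - b m * a n / a m) := by ring
      _ ≤ T m n * (b n * ((β - β₀) * (E m - E n))) := this
      _ = T m n * b n * ((β - β₀) * (E m - E n)) := by ring
  -- sum of LHS is zero
  have hsum1 : ∑ m, ∑ n, T m n * b n = ∑ k, b k := by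
    rw [Finset.sum_comm]
    refine Finset.sum_congr rfl fun n _ => ?_
    rw [← Finset.sum_mul, hT1, one_mul]
  have hsum2 : ∑ m, ∑ n, T m n * (b m * a n / a m) = ∑ k, b k := by
    refine Finset.sum_congr rfl fun m _ => ?_
    have : ∀ n, T m n * (b m * a n / a m) = (b m / a m) * (T m n * a n) := by
      intro n; ring
    rw [Finset.sum_congr rfl fun n _ => this n, ← Finset.mul_sum, hfixa,
      div_mul_cancel₀ _ (hapos m).ne']
  -- main computation
  have hmain : 0 ≤ ∑ m, ∑ n, T m n * b n * ((β - β₀) * (E m - E n)) := by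
    have hle : ∑ m, ∑ n, (T m n * b n - T m n * (b m * a n / a m)) ≤
        ∑ m, ∑ n, T m n * b n * ((β - β₀) * (E m - E n)) :=
      Finset.sum_le_sum fun m _ => Finset.sum_le_sum fun n _ => key m n
    have hzero : ∑ m, ∑ n, (T m n * b n - T m n * (b m * a n / a m)) = 0 := by
      simp only [Finset.sum_sub_distrib]
      rw [hsum1, hsum2, sub_self]
    linarith
  simp only [hp]
  have hrw : (β - β₀) * ∑ m, ∑ n, T m n * (b n / (∑ k, b k)) * (E m - E n) =
      (∑ m, ∑ n, T m n * b n * ((β - β₀) * (E m - E n))) / (∑ k, b k) := by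
    rw [Finset.sum_div, Finset.mul_sum]
    refine Finset.sum_congr rfl fun m _ => ?_
    rw [Finset.sum_div, Finset.mul_sum]
    refine Finset.sum_congr rfl fun n _ => ?_
    ring
  rw [hrw]
  exact div_nonneg hmain hZb.le
end

section
/- Let N be a finite set, E : N → ℝ, d : N → ℕ positive, β₀ ∈ ℝ, p⁰ the Gibbs distribution at inverse temperature β₀, and T a left stochastic matrix with T p⁰ = p⁰. Let p be any probability distribution with positive entries and q := T p. Then the second Clausius inequality holds: β₀ ⟨ΔQ⟩ ≤ ΔS, where ⟨ΔQ⟩ = ∑_n q_n E_n − ∑_n p_n E_n and ΔS = S(q) − S(p) with S(r) = −∑_n r_n log(r_n/d_n). -/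
open Finset Real

/-- Second Clausius inequality. -/
theorem second_clausius_inequality {N : Type*} [Fintype N] [Nonempty N]
    (E : N → ℝ) (d : N → ℕ) (hd : ∀ n, 0 < d n) (β₀ : ℝ)
    (T : N → N → ℝ) (hT0 : ∀ m n, 0 ≤ T m n) (hT1 : ∀ n, ∑ m, T m n = 1)
    (p0 : N → ℝ)
    (hp0 : ∀ n, p0 n = (d n : ℝ) * Real.exp (-β₀ * E n) /
      (∑ k, (d k : ℝ) * Real.exp (-β₀ * E k)))
    (hfix : ∀ m, ∑ n, T m n * p0 n = p0 m)
    (p q : N → ℝ) (hp : ∀ n, 0 < p n) (hpsum : ∑ n, p n = 1)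
    (hq : ∀ m, q m = ∑ n, T m n * p n) (hqpos : ∀ m, 0 < q m) :
    β₀ * ((∑ n, q n * E n) - (∑ n, p n * E n)) ≤
      (-(∑ n, q n * Real.log (q n / (d n : ℝ)))) -
      (-(∑ n, p n * Real.log (p n / (d n : ℝ)))) := by
  set Z : ℝ := ∑ k, (d k : ℝ) * Real.exp (-β₀ * E k) with hZ
  have hZpos : 0 < Z := Finset.sum_pos (fun k _ => by
    have : (0:ℝ) < (d k : ℝ) := by exact_mod_cast hd k
    positivity) univ_nonempty
  have hp0pos : ∀ n, 0 < p0 n := fun n => by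
    rw [hp0 n]
    have : (0:ℝ) < (d n : ℝ) := by exact_mod_cast hd n
    positivity
  have hqsum : ∑ m, q m = 1 := by
    simp only [hq]
    rw [Finset.sum_comm]
    simp_rw [← Finset.sum_mul, hT1, one_mul, hpsum]
  -- data processing inequality
  have key : ∑ m, q m * Real.log (q m / p0 m) ≤ ∑ n, p n * Real.log (p n / p0 n) := by
    have hL : ∑ m, q m * Real.log (q m / p0 m)
        = ∑ m, ∑ n, T m n * p n * Real.log (q m / p0 m) := by
      refine Finset.sum_congr rfl fun m _ => ?_
      rw [hq m, Finset.sum_mul]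
    have hR : ∑ n, p n * Real.log (p n / p0 n)
        = ∑ m, ∑ n, T m n * p n * Real.log (p n / p0 n) := by
      rw [Finset.sum_comm]
      refine Finset.sum_congr rfl fun n _ => ?_
      rw [← Finset.sum_mul, ← Finset.sum_mul, hT1, one_mul]
    rw [hL, hR, ← sub_nonneg, ← Finset.sum_sub_distrib]
    simp_rw [← Finset.sum_sub_distrib, ← mul_sub]
    have step : ∀ m n, T m n * p n * (Real.log (p n / p0 n) - Real.log (q m / p0 m))
        ≥ T m n * p n - T m n * p0 n * (q m / p0 m) := by
      intro m n
      have h1 : 0 < q m / p0 m / (p n / p0 n) := by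
        have := hqpos m; have := hp0pos m; have := hp n; have := hp0pos n; positivity
      have hlog : Real.log (q m / p0 m) - Real.log (p n / p0 n)
          ≤ q m / p0 m / (p n / p0 n) - 1 := by
        have a1 : q m / p0 m ≠ 0 := by have := hqpos m; have := hp0pos m; positivity
        have a2 : p n / p0 n ≠ 0 := by have := hp n; have := hp0pos n; positivity
        rw [← Real.log_div a1 a2]
        exact Real.log_le_sub_one_of_pos h1
      have h2 : T m n * p n * (Real.log (q m / p0 m) - Real.log (p n / p0 n))
          ≤ T m n * p n * (q m / p0 m / (p n / p0 n) - 1) :=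
        mul_le_mul_of_nonneg_left hlog (mul_nonneg (hT0 m n) (hp n).le)
      have h3 : T m n * p n * (q m / p0 m / (p n / p0 n) - 1)
          = T m n * p0 n * (q m / p0 m) - T m n * p n := by
        field_simp [(hp n).ne', (hp0pos m).ne', (hp0pos n).ne']
      nlinarith [h2]
    have hsum : ∑ m, ∑ n, (T m n * p n - T m n * p0 n * (q m / p0 m)) = 0 := by
      simp_rw [Finset.sum_sub_distrib]
      have h1 : ∑ m, ∑ n, T m n * p n = 1 := by rw [← hqsum]; exact Finset.sum_congr rfl fun m _ => (hq m).symm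
      have h2 : ∑ m, ∑ n, T m n * p0 n * (q m / p0 m) = 1 := by
        have : ∀ m, ∑ n, T m n * p0 n * (q m / p0 m) = q m := by
          intro m
          rw [← Finset.sum_mul, hfix m]
          field_simp [(hp0pos m).ne']
        simp_rw [this, hqsum]
      rw [h1, h2, sub_self]
    calc (0:ℝ) = ∑ m, ∑ n, (T m n * p n - T m n * p0 n * (q m / p0 m)) := hsum.symm
      _ ≤ ∑ m, ∑ n, T m n * p n * (Real.log (p n / p0 n) - Real.log (q m / p0 m)) := by
          refine Finset.sum_le_sum fun m _ => Finset.sum_le_sum fun n _ => step m n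
  -- rewrite logs
  have hdecomp : ∀ (r : N → ℝ), (∀ n, 0 < r n) → (∑ n, r n = 1) →
      ∑ n, r n * Real.log (r n / (d n : ℝ))
        = ∑ n, r n * Real.log (r n / p0 n) - β₀ * ∑ n, r n * E n - Real.log Z := by
    intro r hr hrs
    have hterm : ∀ n, r n * Real.log (r n / (d n : ℝ))
        = r n * Real.log (r n / p0 n) - β₀ * (r n * E n) - r n * Real.log Z := by
      intro n
      have hdn : (0:ℝ) < (d n : ℝ) := by exact_mod_cast hd n
      have hlogp0 : Real.log (p0 n)
          = Real.log (d n : ℝ) + (-β₀ * E n) - Real.log Z := by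
        rw [hp0 n, Real.log_div (by positivity) hZpos.ne',
          Real.log_mul hdn.ne' (Real.exp_pos _).ne', Real.log_exp]
      rw [Real.log_div (hr n).ne' hdn.ne', Real.log_div (hr n).ne' (hp0pos n).ne', hlogp0]
      ring
    rw [Finset.sum_congr rfl (fun n _ => hterm n), Finset.sum_sub_distrib,
      Finset.sum_sub_distrib, ← Finset.mul_sum, ← Finset.sum_mul, hrs, one_mul]
  have hqd := hdecomp q hqpos hqsum
  have hpd := hdecomp p hp hpsum
  rw [hqd, hpd]
  linarith [key]
end

section
/- Under the assumptions that T is a Gibbs matrix at inverse temperature β₀ for energies E and degeneracies d, and p is the Gibbs distribution at inverse temperature β with q = T p, the two Clausius inequalities hold simultaneously: β₀ ⟨ΔQ⟩ ≤ ΔS ≤ β ⟨ΔQ⟩, where ⟨ΔQ⟩ = E(q) − E(p) and ΔS = S(q) − S(p). -/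
open Finset Real

/-- The two Clausius inequalities. -/
theorem clausius_inequalities {N : Type*} [Fintype N] [Nonempty N]
    (E : N → ℝ) (d : N → ℕ) (hd : ∀ n, 0 < d n) (β₀ β : ℝ)
    (T : N → N → ℝ) (hT0 : ∀ m n, 0 ≤ T m n) (hT1 : ∀ n, ∑ m, T m n = 1)
    (p0 p q : N → ℝ)
    (hp0 : ∀ n, p0 n = (d n : ℝ) * Real.exp (-β₀ * E n) /
      (∑ k, (d k : ℝ) * Real.exp (-β₀ * E k)))
    (hfix : ∀ m, ∑ n, T m n * p0 n = p0 m)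
    (hp : ∀ n, p n = (d n : ℝ) * Real.exp (-β * E n) /
      (∑ k, (d k : ℝ) * Real.exp (-β * E k)))
    (hq : ∀ m, q m = ∑ n, T m n * p n) (hqpos : ∀ m, 0 < q m) :
    β₀ * ((∑ n, q n * E n) - (∑ n, p n * E n)) ≤
      (-(∑ n, q n * Real.log (q n / (d n : ℝ)))) -
      (-(∑ n, p n * Real.log (p n / (d n : ℝ)))) ∧
    (-(∑ n, q n * Real.log (q n / (d n : ℝ)))) -
      (-(∑ n, p n * Real.log (p n / (d n : ℝ)))) ≤
      β * ((∑ n, q n * E n) - (∑ n, p n * E n)) := by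
  set Z0 : ℝ := ∑ k, (d k : ℝ) * Real.exp (-β₀ * E k) with hZ0def
  set Zβ : ℝ := ∑ k, (d k : ℝ) * Real.exp (-β * E k) with hZβdef
  have hdpos : ∀ n, (0:ℝ) < (d n : ℝ) := fun n => by exact_mod_cast hd n
  have hZ0 : 0 < Z0 :=
    Finset.sum_pos (fun k _ => mul_pos (hdpos k) (Real.exp_pos _)) Finset.univ_nonempty
  have hZβ : 0 < Zβ :=
    Finset.sum_pos (fun k _ => mul_pos (hdpos k) (Real.exp_pos _)) Finset.univ_nonempty
  have hppos : ∀ n, 0 < p n := fun n => by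
    rw [hp]; exact div_pos (mul_pos (hdpos n) (Real.exp_pos _)) hZβ
  have hp0pos : ∀ n, 0 < p0 n := fun n => by
    rw [hp0]; exact div_pos (mul_pos (hdpos n) (Real.exp_pos _)) hZ0
  have hsump : ∑ n, p n = 1 := by
    have : ∑ n, p n = (∑ n, (d n : ℝ) * Real.exp (-β * E n)) / Zβ := by
      rw [Finset.sum_div]; exact Finset.sum_congr rfl fun n _ => hp n
    rw [this, ← hZβdef, div_self hZβ.ne']
  have hsump0 : ∑ n, p0 n = 1 := by
    have : ∑ n, p0 n = (∑ n, (d n : ℝ) * Real.exp (-β₀ * E n)) / Z0 := by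
      rw [Finset.sum_div]; exact Finset.sum_congr rfl fun n _ => hp0 n
    rw [this, ← hZ0def, div_self hZ0.ne']
  have hsumq : ∑ m, q m = 1 := by
    have : ∑ m, q m = ∑ n, (∑ m, T m n) * p n := by
      rw [Finset.sum_congr rfl fun m _ => hq m, Finset.sum_comm]
      exact Finset.sum_congr rfl fun n _ => by rw [Finset.sum_mul]
    rw [this]
    simp only [hT1, one_mul]
    exact hsump
  -- log identities
  have hlogp0 : ∀ n, Real.log (p0 n) = Real.log (d n : ℝ) + (-β₀ * E n) - Real.log Z0 := by
    intro n
    rw [hp0, Real.log_div (mul_pos (hdpos n) (Real.exp_pos _)).ne' hZ0.ne',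
      Real.log_mul (hdpos n).ne' (Real.exp_pos _).ne', Real.log_exp]
  have hlogp : ∀ n, Real.log (p n) = Real.log (d n : ℝ) + (-β * E n) - Real.log Zβ := by
    intro n
    rw [hp, Real.log_div (mul_pos (hdpos n) (Real.exp_pos _)).ne' hZβ.ne',
      Real.log_mul (hdpos n).ne' (Real.exp_pos _).ne', Real.log_exp]
  have hlogd0 : ∀ n, Real.log (d n : ℝ) = Real.log (p0 n) + β₀ * E n + Real.log Z0 := by
    intro n; rw [hlogp0 n]; ring
  have hlogdβ : ∀ n, Real.log (d n : ℝ) = Real.log (p n) + β * E n + Real.log Zβ := by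
    intro n; rw [hlogp n]; ring
  -- nonnegativity of D(q‖p)
  have hDqp : 0 ≤ ∑ n, q n * (Real.log (q n) - Real.log (p n)) := by
    have key : ∀ n, q n * (Real.log (p n) - Real.log (q n)) ≤ p n - q n := by
      intro n
      have hx : 0 < p n / q n := div_pos (hppos n) (hqpos n)
      have := Real.log_le_sub_one_of_pos hx
      rw [Real.log_div (hppos n).ne' (hqpos n).ne'] at this
      have h2 := mul_le_mul_of_nonneg_left this (hqpos n).le
      calc q n * (Real.log (p n) - Real.log (q n)) ≤ q n * (p n / q n - 1) := h2
        _ = p n - q n := by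
            have := (hqpos n).ne'
            field_simp
    have hsum := Finset.sum_le_sum (fun n (_ : n ∈ Finset.univ) => key n)
    have : ∑ n, (p n - q n) = 0 := by rw [Finset.sum_sub_distrib, hsump, hsumq]; ring
    rw [this] at hsum
    have : ∑ n, q n * (Real.log (q n) - Real.log (p n))
        = -∑ n, q n * (Real.log (p n) - Real.log (q n)) := by
      rw [← Finset.sum_neg_distrib]
      exact Finset.sum_congr rfl fun n _ => by ring
    rw [this]
    linarith
  -- data processing inequality: D(q‖p0) ≤ D(p‖p0)
  have hDPI : ∑ m, q m * (Real.log (q m) - Real.log (p0 m)) ≤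
      ∑ n, p n * (Real.log (p n) - Real.log (p0 n)) := by
    have key : ∀ m, q m * (Real.log (q m) - Real.log (p0 m)) ≤
        ∑ n, T m n * p n * (Real.log (p n) - Real.log (p0 n)) := by
      intro m
      have hL : q m * (Real.log (q m) - Real.log (p0 m)) =
          ∑ n, T m n * p n * (Real.log (q m) - Real.log (p0 m)) := by
        rw [← Finset.sum_mul, ← hq m]
      rw [hL]
      have hterm : ∀ n, T m n * p n * ((Real.log (q m) - Real.log (p0 m))
          - (Real.log (p n) - Real.log (p0 n)))
          ≤ T m n * p0 n * (q m / p0 m) - T m n * p n := by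
        intro n
        rcases eq_or_lt_of_le (hT0 m n) with h0 | hTpos
        · rw [← h0]; simp
        · set x : ℝ := q m * p0 n / (p0 m * p n) with hxdef
          have hx : 0 < x := by
            apply div_pos (mul_pos (hqpos m) (hp0pos n)) (mul_pos (hp0pos m) (hppos n))
          have hlogx : Real.log x = (Real.log (q m) - Real.log (p0 m))
              - (Real.log (p n) - Real.log (p0 n)) := by
            rw [hxdef, Real.log_div (mul_pos (hqpos m) (hp0pos n)).ne'
              (mul_pos (hp0pos m) (hppos n)).ne',
              Real.log_mul (hqpos m).ne' (hp0pos n).ne',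
              Real.log_mul (hp0pos m).ne' (hppos n).ne']
            ring
          have hle := Real.log_le_sub_one_of_pos hx
          have h2 := mul_le_mul_of_nonneg_left hle
            (mul_nonneg hTpos.le (hppos n).le)
          rw [hlogx] at h2
          calc T m n * p n * ((Real.log (q m) - Real.log (p0 m))
                - (Real.log (p n) - Real.log (p0 n)))
              ≤ T m n * p n * (x - 1) := h2
            _ = T m n * p0 n * (q m / p0 m) - T m n * p n := by
                have h1 := (hppos n).ne'
                have h2 := (hp0pos m).ne'
                rw [hxdef]; field_simp
      have hsumterm := Finset.sum_le_sum (fun n (_ : n ∈ Finset.univ) => hterm n)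
      have hRHS : ∑ n, (T m n * p0 n * (q m / p0 m) - T m n * p n) = 0 := by
        rw [Finset.sum_sub_distrib, ← Finset.sum_mul, hfix m, ← hq m]
        have := (hp0pos m).ne'
        field_simp; ring
      rw [hRHS] at hsumterm
      have hexp : ∑ n, T m n * p n * ((Real.log (q m) - Real.log (p0 m))
          - (Real.log (p n) - Real.log (p0 n)))
          = (∑ n, T m n * p n * (Real.log (q m) - Real.log (p0 m)))
            - ∑ n, T m n * p n * (Real.log (p n) - Real.log (p0 n)) := by
        rw [← Finset.sum_sub_distrib]
        exact Finset.sum_congr rfl fun n _ => by ring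
      rw [hexp] at hsumterm
      linarith
    calc ∑ m, q m * (Real.log (q m) - Real.log (p0 m))
        ≤ ∑ m, ∑ n, T m n * p n * (Real.log (p n) - Real.log (p0 n)) :=
          Finset.sum_le_sum fun m _ => key m
      _ = ∑ n, p n * (Real.log (p n) - Real.log (p0 n)) := by
          rw [Finset.sum_comm]
          refine Finset.sum_congr rfl fun n _ => ?_
          rw [← Finset.sum_mul, ← Finset.sum_mul, hT1, one_mul]
  -- rewrite the entropy sums
  have hSq0 : ∑ n, q n * Real.log (q n / (d n : ℝ))
      = (∑ n, q n * (Real.log (q n) - Real.log (p0 n)))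
        - β₀ * ∑ n, q n * E n - Real.log Z0 := by
    have h1 : ∀ n, q n * Real.log (q n / (d n : ℝ))
        = q n * (Real.log (q n) - Real.log (p0 n)) - β₀ * (q n * E n)
          - Real.log Z0 * q n := by
      intro n
      rw [Real.log_div (hqpos n).ne' (hdpos n).ne', hlogd0 n]
      ring
    rw [Finset.sum_congr rfl fun n _ => h1 n]
    rw [Finset.sum_sub_distrib, Finset.sum_sub_distrib, ← Finset.mul_sum, ← Finset.mul_sum,
      hsumq, mul_one]
  have hSp0 : ∑ n, p n * Real.log (p n / (d n : ℝ))
      = (∑ n, p n * (Real.log (p n) - Real.log (p0 n)))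
        - β₀ * ∑ n, p n * E n - Real.log Z0 := by
    have h1 : ∀ n, p n * Real.log (p n / (d n : ℝ))
        = p n * (Real.log (p n) - Real.log (p0 n)) - β₀ * (p n * E n)
          - Real.log Z0 * p n := by
      intro n
      rw [Real.log_div (hppos n).ne' (hdpos n).ne', hlogd0 n]
      ring
    rw [Finset.sum_congr rfl fun n _ => h1 n]
    rw [Finset.sum_sub_distrib, Finset.sum_sub_distrib, ← Finset.mul_sum, ← Finset.mul_sum,
      hsump, mul_one]
  have hSqβ : ∑ n, q n * Real.log (q n / (d n : ℝ))
      = (∑ n, q n * (Real.log (q n) - Real.log (p n)))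
        - β * ∑ n, q n * E n - Real.log Zβ := by
    have h1 : ∀ n, q n * Real.log (q n / (d n : ℝ))
        = q n * (Real.log (q n) - Real.log (p n)) - β * (q n * E n)
          - Real.log Zβ * q n := by
      intro n
      rw [Real.log_div (hqpos n).ne' (hdpos n).ne', hlogdβ n]
      ring
    rw [Finset.sum_congr rfl fun n _ => h1 n]
    rw [Finset.sum_sub_distrib, Finset.sum_sub_distrib, ← Finset.mul_sum, ← Finset.mul_sum,
      hsumq, mul_one]
  have hSpβ : ∑ n, p n * Real.log (p n / (d n : ℝ))
      = - β * ∑ n, p n * E n - Real.log Zβ := by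
    have h1 : ∀ n, p n * Real.log (p n / (d n : ℝ))
        = - β * (p n * E n) - Real.log Zβ * p n := by
      intro n
      rw [Real.log_div (hppos n).ne' (hdpos n).ne', hlogdβ n]
      ring
    rw [Finset.sum_congr rfl fun n _ => h1 n]
    rw [Finset.sum_sub_distrib, ← Finset.mul_sum, ← Finset.mul_sum, hsump, mul_one]
  constructor
  · rw [hSq0, hSp0]; linarith
  · rw [hSqβ, hSpβ]; linarith
end

section
/- Let T be a Gibbs matrix at inverse temperature β₀ ≥ 0 for energies E and degeneracies d, let p be the Gibbs distribution at inverse temperature β ≥ 0, and q = T p with positive entries. Then (β − β₀) · ΔS ≥ 0, where ΔS = S(q) − S(p): on average, entropy flows from the hotter to the colder system. -/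
open Finset Real

/-- Gibbs' inequality: relative entropy is nonnegative. -/
lemma gibbs_aux {N : Type*} [Fintype N] (a b : N → ℝ)
    (ha : ∀ n, 0 < a n) (hb : ∀ n, 0 < b n)
    (hsum : ∑ n, a n = ∑ n, b n) :
    0 ≤ ∑ n, a n * Real.log (a n / b n) := by
  have h : ∑ n, a n * Real.log (b n / a n) ≤ 0 := by
    calc ∑ n, a n * Real.log (b n / a n)
        ≤ ∑ n, a n * (b n / a n - 1) := by
          refine Finset.sum_le_sum fun n _ => ?_
          exact mul_le_mul_of_nonneg_left
            (Real.log_le_sub_one_of_pos (div_pos (hb n) (ha n))) (ha n).le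
      _ = ∑ n, (b n - a n) := by
          refine Finset.sum_congr rfl fun n _ => ?_
          rw [mul_sub, mul_one, ← mul_div_assoc, mul_div_cancel_left₀ _ (ha n).ne']
      _ = 0 := by rw [Finset.sum_sub_distrib, hsum, sub_self]
  have key : ∑ n, a n * Real.log (a n / b n) = -∑ n, a n * Real.log (b n / a n) := by
    rw [← Finset.sum_neg_distrib]
    refine Finset.sum_congr rfl fun n _ => ?_
    rw [Real.log_div (ha n).ne' (hb n).ne', Real.log_div (hb n).ne' (ha n).ne']
    ring
  rw [key]
  linarith

/-- Data processing: relative entropy to a fixed point decreases under a stochastic map. -/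
lemma data_processing_aux {N : Type*} [Fintype N] (T : N → N → ℝ)
    (hT0 : ∀ m n, 0 ≤ T m n) (hT1 : ∀ n, ∑ m, T m n = 1)
    (r p q : N → ℝ) (hr : ∀ n, 0 < r n) (hp : ∀ n, 0 < p n)
    (hfix : ∀ m, ∑ n, T m n * r n = r m)
    (hq : ∀ m, q m = ∑ n, T m n * p n) :
    ∑ m, q m * Real.log (q m / r m) ≤ ∑ n, p n * Real.log (p n / r n) := by
  have pointwise : ∀ m, q m * Real.log (q m / r m) ≤
      ∑ n, T m n * (p n * Real.log (p n / r n)) := by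
    intro m
    set w : N → ℝ := fun n => T m n * r n / r m with hw
    set z : N → ℝ := fun n => p n / r n with hz
    have hw0 : ∀ n ∈ Finset.univ, 0 ≤ w n := fun n _ =>
      div_nonneg (mul_nonneg (hT0 m n) (hr n).le) (hr m).le
    have hw1 : ∑ n, w n = 1 := by
      simp only [hw, ← Finset.sum_div, hfix m, div_self (hr m).ne']
    have hmem : ∀ n ∈ Finset.univ, z n ∈ Set.Ici (0 : ℝ) := fun n _ =>
      (div_pos (hp n) (hr n)).le
    have jensen := Real.convexOn_mul_log.map_sum_le hw0 hw1 hmem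
    simp only [smul_eq_mul] at jensen
    have harg : ∑ n, w n * z n = q m / r m := by
      rw [hq m, Finset.sum_div]
      refine Finset.sum_congr rfl fun n _ => ?_
      simp only [hw, hz]
      field_simp [(hr n).ne', (hr m).ne']
    rw [harg] at jensen
    have hmul := mul_le_mul_of_nonneg_right jensen (hr m).le
    have l1 : q m / r m * Real.log (q m / r m) * r m = q m * Real.log (q m / r m) := by
      rw [div_mul_eq_mul_div, div_mul_cancel₀ _ (hr m).ne']
    have l2 : (∑ n, w n * (z n * Real.log (z n))) * r m
        = ∑ n, T m n * (p n * Real.log (p n / r n)) := by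
      rw [Finset.sum_mul]
      refine Finset.sum_congr rfl fun n _ => ?_
      simp only [hw, hz]
      field_simp [(hr n).ne', (hr m).ne']
    rw [l1, l2] at hmul
    exact hmul
  calc ∑ m, q m * Real.log (q m / r m)
      ≤ ∑ m, ∑ n, T m n * (p n * Real.log (p n / r n)) :=
        Finset.sum_le_sum fun m _ => pointwise m
    _ = ∑ n, (∑ m, T m n) * (p n * Real.log (p n / r n)) := by
        rw [Finset.sum_comm]
        simp [Finset.sum_mul]
    _ = ∑ n, p n * Real.log (p n / r n) := by simp [hT1]

/-- Entropy flows on average from the hotter to the colder system. -/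
theorem entropy_flow_direction {N : Type*} [Fintype N] [Nonempty N]
    (E : N → ℝ) (d : N → ℕ) (hd : ∀ n, 0 < d n) (β₀ β : ℝ)
    (hβ₀ : 0 ≤ β₀) (hβ : 0 ≤ β)
    (T : N → N → ℝ) (hT0 : ∀ m n, 0 ≤ T m n) (hT1 : ∀ n, ∑ m, T m n = 1)
    (p0 p q : N → ℝ)
    (hp0 : ∀ n, p0 n = (d n : ℝ) * Real.exp (-β₀ * E n) /
      (∑ k, (d k : ℝ) * Real.exp (-β₀ * E k)))
    (hfix : ∀ m, ∑ n, T m n * p0 n = p0 m)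
    (hp : ∀ n, p n = (d n : ℝ) * Real.exp (-β * E n) /
      (∑ k, (d k : ℝ) * Real.exp (-β * E k)))
    (hq : ∀ m, q m = ∑ n, T m n * p n) (hqpos : ∀ m, 0 < q m) :
    0 ≤ (β - β₀) *
      ((-(∑ n, q n * Real.log (q n / (d n : ℝ)))) -
       (-(∑ n, p n * Real.log (p n / (d n : ℝ))))) := by
  have hdpos : ∀ n, (0 : ℝ) < (d n : ℝ) := fun n => by exact_mod_cast hd n
  set Z : ℝ := ∑ k, (d k : ℝ) * Real.exp (-β * E k) with hZdef
  set Z₀ : ℝ := ∑ k, (d k : ℝ) * Real.exp (-β₀ * E k) with hZ0def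
  have hZ : 0 < Z := Finset.sum_pos
    (fun k _ => mul_pos (hdpos k) (Real.exp_pos _)) Finset.univ_nonempty
  have hZ0 : 0 < Z₀ := Finset.sum_pos
    (fun k _ => mul_pos (hdpos k) (Real.exp_pos _)) Finset.univ_nonempty
  have hppos : ∀ n, 0 < p n := fun n => by
    rw [hp n]; exact div_pos (mul_pos (hdpos n) (Real.exp_pos _)) hZ
  have hp0pos : ∀ n, 0 < p0 n := fun n => by
    rw [hp0 n]; exact div_pos (mul_pos (hdpos n) (Real.exp_pos _)) hZ0
  have hpsum : ∑ n, p n = 1 := by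
    simp only [hp]; rw [← Finset.sum_div, ← hZdef, div_self hZ.ne']
  have hqsum : ∑ m, q m = 1 := by
    simp only [hq]
    rw [Finset.sum_comm]
    calc ∑ n, ∑ m, T m n * p n = ∑ n, (∑ m, T m n) * p n := by
          simp [Finset.sum_mul]
      _ = ∑ n, p n := by simp [hT1]
      _ = 1 := hpsum
  -- log identities
  have hlogp : ∀ n, Real.log (p n / (d n : ℝ)) = -β * E n - Real.log Z := by
    intro n
    have h1 : p n / (d n : ℝ) = Real.exp (-β * E n) / Z := by
      rw [hp n, div_div, mul_comm Z ((d n : ℝ)), mul_div_mul_left _ _ (hdpos n).ne']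
    rw [h1, Real.log_div (Real.exp_pos _).ne' hZ.ne', Real.log_exp]
  have hlogp0 : ∀ n, Real.log (p0 n / (d n : ℝ)) = -β₀ * E n - Real.log Z₀ := by
    intro n
    have h1 : p0 n / (d n : ℝ) = Real.exp (-β₀ * E n) / Z₀ := by
      rw [hp0 n, div_div, mul_comm Z₀ ((d n : ℝ)), mul_div_mul_left _ _ (hdpos n).ne']
    rw [h1, Real.log_div (Real.exp_pos _).ne' hZ0.ne', Real.log_exp]
  -- generic weighted sums of the log identities
  have sumlin : ∀ (w g : N → ℝ) (b c : ℝ), (∑ n, w n = 1) →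
      (∀ n, g n = -b * E n - c) →
      ∑ n, w n * g n = -b * (∑ n, w n * E n) - c := by
    intro w g b c hw hg
    calc ∑ n, w n * g n = ∑ n, (-b * (w n * E n) - w n * c) := by
          refine Finset.sum_congr rfl fun n _ => ?_
          rw [hg n]; ring
      _ = -b * (∑ n, w n * E n) - (∑ n, w n) * c := by
          rw [Finset.sum_sub_distrib, Finset.mul_sum, Finset.sum_mul]
      _ = _ := by rw [hw, one_mul]
  set A : ℝ := ∑ n, p n * E n with hA
  set B : ℝ := ∑ n, q n * E n with hB
  have e1 : ∑ n, p n * Real.log (p n / (d n : ℝ)) = -β * A - Real.log Z :=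
    sumlin p _ β (Real.log Z) hpsum hlogp
  have e2 : ∑ n, q n * Real.log (p n / (d n : ℝ)) = -β * B - Real.log Z :=
    sumlin q _ β (Real.log Z) hqsum hlogp
  have e3 : ∑ n, p n * Real.log (p0 n / (d n : ℝ)) = -β₀ * A - Real.log Z₀ :=
    sumlin p _ β₀ (Real.log Z₀) hpsum hlogp0
  have e4 : ∑ n, q n * Real.log (p0 n / (d n : ℝ)) = -β₀ * B - Real.log Z₀ :=
    sumlin q _ β₀ (Real.log Z₀) hqsum hlogp0
  -- log difference identity
  have logsplit : ∀ (w a b : N → ℝ), (∀ n, 0 < a n) → (∀ n, 0 < b n) →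
      ∑ n, w n * Real.log (a n / b n) =
      ∑ n, w n * Real.log (a n / (d n : ℝ)) -
      ∑ n, w n * Real.log (b n / (d n : ℝ)) := by
    intro w a b ha hb
    rw [← Finset.sum_sub_distrib]
    refine Finset.sum_congr rfl fun n _ => ?_
    rw [Real.log_div (ha n).ne' (hb n).ne', Real.log_div (ha n).ne' (hdpos n).ne',
      Real.log_div (hb n).ne' (hdpos n).ne']
    ring
  -- Clausius 1 (Gibbs inequality)
  have gib : 0 ≤ ∑ n, q n * Real.log (q n / p n) :=
    gibbs_aux q p hqpos hppos (by rw [hqsum, hpsum])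
  rw [logsplit q q p hqpos hppos] at gib
  -- Clausius 2 (data processing)
  have dp := data_processing_aux T hT0 hT1 p0 p q hp0pos hppos hfix hq
  rw [logsplit q q p0 hqpos hp0pos, logsplit p p p0 hppos hp0pos, e3, e4] at dp
  set Sp : ℝ := ∑ n, p n * Real.log (p n / (d n : ℝ)) with hSp
  set Sq : ℝ := ∑ n, q n * Real.log (q n / (d n : ℝ)) with hSq
  rw [e2] at gib
  have h2 : Sp - Sq ≤ β * B - β * A := by
    rw [e1]; linarith [gib]
  have h3 : β₀ * B - β₀ * A ≤ Sp - Sq := by linarith [dp]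
  rcases le_total β₀ β with hc | hc
  · nlinarith [mul_nonneg (sub_nonneg.mpr hc) (sub_nonneg.mpr h3),
      mul_nonneg hβ₀ (by linarith : (0:ℝ) ≤ (β * B - β * A) - (β₀ * B - β₀ * A))]
  · nlinarith [mul_nonneg (sub_nonneg.mpr hc) (sub_nonneg.mpr h2),
      mul_nonneg hβ (by linarith : (0:ℝ) ≤ (β * B - β * A) - (β₀ * B - β₀ * A))]
end

section
/- Let T be a left stochastic matrix on a finite set I, p a probability distribution on I with positive entries, p⁰ a probability distribution on I with positive entries, and define q := T p and q⁰ := T p⁰, assuming all entries of q and q⁰ are positive. Then the KL divergence is monotone under T: S(q‖q⁰) ≤ S(p‖p⁰), where S(a‖b) = ∑ a_i log(a_i/b_i). -/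
open Finset Real

/-- Monotonicity of the Kullback–Leibler divergence under stochastic maps. -/
theorem kl_divergence_monotone {I : Type*} [Fintype I]
    (T : I → I → ℝ) (hT0 : ∀ m n, 0 ≤ T m n) (hT1 : ∀ n, ∑ m, T m n = 1)
    (p p0 q q0 : I → ℝ)
    (hp : ∀ i, 0 < p i) (hpsum : ∑ i, p i = 1)
    (hp0 : ∀ i, 0 < p0 i) (hp0sum : ∑ i, p0 i = 1)
    (hq : ∀ j, q j = ∑ i, T j i * p i) (hqpos : ∀ j, 0 < q j)
    (hq0 : ∀ j, q0 j = ∑ i, T j i * p0 i) (hq0pos : ∀ j, 0 < q0 j) :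
    ∑ j, q j * Real.log (q j / q0 j) ≤ ∑ i, p i * Real.log (p i / p0 i) := by
  rw [← sub_nonneg]
  have h1 : ∑ i, p i * Real.log (p i / p0 i)
      = ∑ j, ∑ i, T j i * p i * Real.log (p i / p0 i) := by
    rw [Finset.sum_comm]
    refine Finset.sum_congr rfl fun i _ => ?_
    rw [← Finset.sum_mul, ← Finset.sum_mul, hT1, one_mul]
  have h2 : ∑ j, q j * Real.log (q j / q0 j)
      = ∑ j, ∑ i, T j i * p i * Real.log (q j / q0 j) := by
    refine Finset.sum_congr rfl fun j _ => ?_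
    rw [hq, Finset.sum_mul]
  rw [h1, h2]
  simp only [← Finset.sum_sub_distrib]
  have key : ∀ j i, T j i * p i - T j i * p0 i * (q j / q0 j)
      ≤ T j i * p i * Real.log (p i / p0 i) - T j i * p i * Real.log (q j / q0 j) := by
    intro j i
    rcases eq_or_lt_of_le (hT0 j i) with h | h
    · simp [← h]
    · have hx : 0 < p0 i * q j / (p i * q0 j) :=
        div_pos (mul_pos (hp0 i) (hqpos j)) (mul_pos (hp i) (hq0pos j))
      have hlog := Real.log_le_sub_one_of_pos hx
      have hid : Real.log (p0 i * q j / (p i * q0 j))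
          = Real.log (q j / q0 j) - Real.log (p i / p0 i) := by
        rw [Real.log_div (mul_pos (hp0 i) (hqpos j)).ne' (mul_pos (hp i) (hq0pos j)).ne',
            Real.log_div (hqpos j).ne' (hq0pos j).ne',
            Real.log_div (hp i).ne' (hp0 i).ne',
            Real.log_mul (hp0 i).ne' (hqpos j).ne',
            Real.log_mul (hp i).ne' (hq0pos j).ne']
        ring
      rw [hid] at hlog
      have hxval : p0 i * q j / (p i * q0 j) = (p0 i * (q j / q0 j)) / p i := by
        ring
      have h3 : p i * (Real.log (q j / q0 j) - Real.log (p i / p0 i))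
          ≤ p0 i * (q j / q0 j) - p i := by
        have := mul_le_mul_of_nonneg_left hlog (hp i).le
        rw [hxval] at this
        calc p i * (Real.log (q j / q0 j) - Real.log (p i / p0 i))
            ≤ p i * (p0 i * (q j / q0 j) / p i - 1) := this
          _ = p0 i * (q j / q0 j) - p i := by
              rw [mul_sub, mul_one, mul_div_cancel₀ _ (hp i).ne']
      nlinarith [mul_le_mul_of_nonneg_left h3 h.le]
  refine le_trans (le_of_eq ?_) (Finset.sum_le_sum fun j _ =>
    Finset.sum_le_sum fun i _ => key j i)
  have hA : ∑ j, ∑ i, (T j i * p i - T j i * p0 i * (q j / q0 j))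
      = ∑ j : I, (q j - q j) := by
    refine Finset.sum_congr rfl fun j _ => ?_
    rw [Finset.sum_sub_distrib, ← hq j]
    congr 1
    have : ∑ i, T j i * p0 i * (q j / q0 j) = (∑ i, T j i * p0 i) * (q j / q0 j) := by
      rw [Finset.sum_mul]
    rw [this, ← hq0 j, mul_comm, div_mul_cancel₀ _ (hq0pos j).ne']
  rw [hA]
  simp
end

section
/- Let N be a finite set, E : N → ℝ, d : N → ℕ positive, and T a left stochastic matrix satisfying the modified bi-stochasticity condition ∑_n T_{mn} d_n = d_m for all m. Let p be the Gibbs distribution at inverse temperature β ≥ 0 and q = T p with positive entries. Then 0 ≤ ΔS ≤ β ⟨w⟩, where ΔS = S(q) − S(p) and ⟨w⟩ = E(q) − E(p). In particular the average work ⟨w⟩ is nonnegative and entropy does not decrease. -/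
open Finset Real

/-- Bi-stochastic (work process) case: entropy does not decrease and
the average work is bounded below by the entropy increase over β. -/
theorem bistochastic_work_inequalities {N : Type*} [Fintype N] [Nonempty N]
    (E : N → ℝ) (d : N → ℕ) (hd : ∀ n, 0 < d n) (β : ℝ) (hβ : 0 ≤ β)
    (T : N → N → ℝ) (hT0 : ∀ m n, 0 ≤ T m n) (hT1 : ∀ n, ∑ m, T m n = 1)
    (hTbi : ∀ m, ∑ n, T m n * (d n : ℝ) = (d m : ℝ))
    (p q : N → ℝ)
    (hp : ∀ n, p n = (d n : ℝ) * Real.exp (-β * E n) /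
      (∑ k, (d k : ℝ) * Real.exp (-β * E k)))
    (hq : ∀ m, q m = ∑ n, T m n * p n) (hqpos : ∀ m, 0 < q m) :
    0 ≤ (-(∑ n, q n * Real.log (q n / (d n : ℝ)))) -
        (-(∑ n, p n * Real.log (p n / (d n : ℝ)))) ∧
    (-(∑ n, q n * Real.log (q n / (d n : ℝ)))) -
        (-(∑ n, p n * Real.log (p n / (d n : ℝ)))) ≤
      β * ((∑ n, q n * E n) - (∑ n, p n * E n)) := by
  have hdpos : ∀ n, (0:ℝ) < (d n : ℝ) := fun n => by exact_mod_cast hd n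
  have hdne : ∀ n, ((d n : ℝ)) ≠ 0 := fun n => (hdpos n).ne'
  set Z := ∑ k, (d k : ℝ) * Real.exp (-β * E k) with hZdef
  have hZ : 0 < Z :=
    Finset.sum_pos (fun k _ => mul_pos (hdpos k) (Real.exp_pos _)) univ_nonempty
  have hppos : ∀ n, 0 < p n := fun n => by
    rw [hp n]; exact div_pos (mul_pos (hdpos n) (Real.exp_pos _)) hZ
  have hpne : ∀ n, p n ≠ 0 := fun n => (hppos n).ne'
  have hpsum : ∑ n, p n = 1 := by
    simp only [hp]
    rw [← Finset.sum_div, div_self hZ.ne']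
  have hqsum : ∑ m, q m = 1 := by
    simp only [hq]
    rw [Finset.sum_comm]
    calc ∑ n, ∑ m, T m n * p n = ∑ n, (∑ m, T m n) * p n := by
          simp [Finset.sum_mul]
      _ = 1 := by simp [hT1, hpsum]
  -- key inequality 1: entropy increases
  have key1 : ∑ m, q m * Real.log (q m / (d m : ℝ)) ≤
      ∑ n, p n * Real.log (p n / (d n : ℝ)) := by
    have hstep : ∀ m, q m * Real.log (q m / (d m : ℝ)) ≤
        ∑ n, T m n * p n * Real.log (p n / (d n : ℝ)) := by
      intro m
      have hw0 : ∀ n ∈ Finset.univ, 0 ≤ T m n * (d n : ℝ) / (d m : ℝ) := fun n _ =>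
        div_nonneg (mul_nonneg (hT0 m n) (hdpos n).le) (hdpos m).le
      have hw1 : ∑ n, T m n * (d n : ℝ) / (d m : ℝ) = 1 := by
        rw [← Finset.sum_div, hTbi m, div_self (hdne m)]
      have hmem : ∀ n ∈ Finset.univ, p n / (d n : ℝ) ∈ Set.Ici (0:ℝ) := fun n _ =>
        le_of_lt (div_pos (hppos n) (hdpos n))
      have hJ := Real.convexOn_mul_log.map_sum_le hw0 hw1 hmem
      have hsum : ∑ n, (T m n * (d n : ℝ) / (d m : ℝ)) • (p n / (d n : ℝ))
          = q m / (d m : ℝ) := by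
        rw [hq m, Finset.sum_div]
        refine Finset.sum_congr rfl fun n _ => ?_
        rw [smul_eq_mul]
        field_simp [hdne n, hdne m]
      rw [hsum] at hJ
      have hJ2 := mul_le_mul_of_nonneg_left hJ (hdpos m).le
      calc q m * Real.log (q m / (d m : ℝ))
          = (d m : ℝ) * (q m / (d m : ℝ) * Real.log (q m / (d m : ℝ))) := by
            have hcancel : (d m : ℝ) * (q m / (d m : ℝ)) = q m :=
              mul_div_cancel₀ (q m) (hdne m)
            rw [← mul_assoc, hcancel]
        _ ≤ (d m : ℝ) * ∑ n, (T m n * (d n : ℝ) / (d m : ℝ)) •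
              (p n / (d n : ℝ) * Real.log (p n / (d n : ℝ))) := hJ2
        _ = ∑ n, T m n * p n * Real.log (p n / (d n : ℝ)) := by
            rw [Finset.mul_sum]
            refine Finset.sum_congr rfl fun n _ => ?_
            rw [smul_eq_mul]
            field_simp [hdne n, hdne m]
    calc ∑ m, q m * Real.log (q m / (d m : ℝ))
        ≤ ∑ m, ∑ n, T m n * p n * Real.log (p n / (d n : ℝ)) :=
          Finset.sum_le_sum fun m _ => hstep m
      _ = ∑ n, p n * Real.log (p n / (d n : ℝ)) := by
          rw [Finset.sum_comm]
          refine Finset.sum_congr rfl fun n _ => ?_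
          rw [← Finset.sum_mul, ← Finset.sum_mul, hT1 n, one_mul]
  -- log of p n / d n
  have hlogp : ∀ n, Real.log (p n / (d n : ℝ)) = -β * E n - Real.log Z := by
    intro n
    have : p n / (d n : ℝ) = Real.exp (-β * E n) / Z := by
      rw [hp n]
      field_simp [hdne n, hZ.ne']
    rw [this, Real.log_div (Real.exp_pos _).ne' hZ.ne', Real.log_exp]
  have hlogq : ∀ n, Real.log (q n / (d n : ℝ))
      = Real.log (q n / p n) + (-β * E n - Real.log Z) := by
    intro n
    have h1 : q n / (d n : ℝ) = (q n / p n) * (p n / (d n : ℝ)) := by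
      rw [div_mul_div_comm, mul_comm (q n) (p n), mul_div_mul_left _ _ (hpne n)]
    rw [h1, Real.log_mul (div_pos (hqpos n) (hppos n)).ne'
      (div_pos (hppos n) (hdpos n)).ne', hlogp n]
  have hsp : ∑ n, p n * Real.log (p n / (d n : ℝ))
      = -β * (∑ n, p n * E n) - Real.log Z := by
    have h : ∀ n, p n * Real.log (p n / (d n : ℝ))
        = -β * (p n * E n) - Real.log Z * p n := fun n => by rw [hlogp n]; ring
    rw [Finset.sum_congr rfl fun n _ => h n, Finset.sum_sub_distrib,
      ← Finset.mul_sum, ← Finset.mul_sum, hpsum]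
    ring
  have hsq : ∑ n, q n * Real.log (q n / (d n : ℝ))
      = (∑ n, q n * Real.log (q n / p n)) + (-β * (∑ n, q n * E n) - Real.log Z) := by
    have h : ∀ n, q n * Real.log (q n / (d n : ℝ))
        = q n * Real.log (q n / p n) + (-β * (q n * E n)) - Real.log Z * q n :=
      fun n => by rw [hlogq n]; ring
    rw [Finset.sum_congr rfl fun n _ => h n, Finset.sum_sub_distrib,
      Finset.sum_add_distrib, ← Finset.mul_sum, ← Finset.mul_sum, hqsum]
    ring
  -- Gibbs inequality: ∑ q log (q/p) ≥ 0
  have hgibbs : 0 ≤ ∑ n, q n * Real.log (q n / p n) := by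
    have hterm : ∀ n, q n - p n ≤ q n * Real.log (q n / p n) := by
      intro n
      have h1 : Real.log (p n / q n) ≤ p n / q n - 1 :=
        Real.log_le_sub_one_of_pos (div_pos (hppos n) (hqpos n))
      have h2 : Real.log (p n / q n) = -Real.log (q n / p n) := by
        rw [← Real.log_inv]
        congr 1
        rw [inv_div]
      rw [h2] at h1
      have h3 := mul_le_mul_of_nonneg_left h1 (hqpos n).le
      have h4 : q n * (p n / q n - 1) = p n - q n := by
        rw [mul_sub, mul_one, mul_div_assoc', mul_div_cancel_left₀ _ (hqpos n).ne']
      nlinarith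
    calc (0:ℝ) = ∑ n, (q n - p n) := by
          rw [Finset.sum_sub_distrib, hqsum, hpsum]; ring
      _ ≤ _ := Finset.sum_le_sum fun n _ => hterm n
  constructor
  · linarith
  · rw [hsq, hsp]
    linarith
end

section
/- Let N be a finite set, E : N → ℝ, d : N → ℕ positive, β₀ ∈ ℝ, p⁰ the Gibbs distribution at inverse temperature β₀, and T a left stochastic matrix with T p⁰ = p⁰. Then the quantity a := β₀ ∑_{n,m} T_{nm} p⁰_m E_m (E_m − E_n) satisfies a = (β₀/4) ∑_{n,m} (T_{nm} p⁰_m + T_{mn} p⁰_n)(E_m − E_n)², and in particular a ≥ 0 whenever β₀ ≥ 0. -/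
open Finset Real

/-- Symmetrization identity and nonnegativity of the slope `a`. -/
theorem slope_symmetrization_nonneg {N : Type*} [Fintype N] [Nonempty N]
    (E : N → ℝ) (d : N → ℕ) (hd : ∀ n, 0 < d n) (β₀ : ℝ)
    (T : N → N → ℝ) (hT0 : ∀ m n, 0 ≤ T m n) (hT1 : ∀ n, ∑ m, T m n = 1)
    (p0 : N → ℝ)
    (hp0 : ∀ n, p0 n = (d n : ℝ) * Real.exp (-β₀ * E n) /
      (∑ k, (d k : ℝ) * Real.exp (-β₀ * E k)))
    (hfix : ∀ m, ∑ n, T m n * p0 n = p0 m) :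
    β₀ * ∑ n, ∑ m, T n m * p0 m * E m * (E m - E n) =
      (β₀ / 4) * ∑ n, ∑ m, (T n m * p0 m + T m n * p0 n) * (E m - E n) ^ 2 ∧
    (0 ≤ β₀ → 0 ≤ β₀ * ∑ n, ∑ m, T n m * p0 m * E m * (E m - E n)) := by
  have hp0nn : ∀ n, 0 ≤ p0 n := by
    intro n
    rw [hp0 n]
    have hnum : 0 ≤ (d n : ℝ) * Real.exp (-β₀ * E n) := by positivity
    have hden : 0 ≤ ∑ k, (d k : ℝ) * Real.exp (-β₀ * E k) :=
      Finset.sum_nonneg fun k _ => by positivity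
    exact div_nonneg hnum hden
  -- A = C = ∑ p E²
  have hA : ∑ n, ∑ m, T n m * p0 m * E m ^ 2 = ∑ k, p0 k * E k ^ 2 := by
    rw [Finset.sum_comm]
    refine Finset.sum_congr rfl fun m _ => ?_
    have : ∑ n, T n m * p0 m * E m ^ 2 = (∑ n, T n m) * (p0 m * E m ^ 2) := by
      rw [Finset.sum_mul]
      exact Finset.sum_congr rfl fun n _ => by ring
    rw [this, hT1, one_mul]
  have hC : ∑ n, ∑ m, T n m * p0 m * E n ^ 2 = ∑ k, p0 k * E k ^ 2 := by
    refine Finset.sum_congr rfl fun n _ => ?_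
    have : ∑ m, T n m * p0 m * E n ^ 2 = (∑ m, T n m * p0 m) * E n ^ 2 := by
      rw [Finset.sum_mul]
    rw [this, hfix]
  -- swap identity for the symmetric part
  have hswap : ∑ n, ∑ m, T m n * p0 n * (E m - E n) ^ 2
      = ∑ n, ∑ m, T n m * p0 m * (E m - E n) ^ 2 := by
    rw [Finset.sum_comm]
    refine Finset.sum_congr rfl fun m _ => Finset.sum_congr rfl fun n _ => by ring
  -- key identity
  have key : ∑ n, ∑ m, T n m * p0 m * E m * (E m - E n)
      = (1 / 2) * ∑ n, ∑ m, T n m * p0 m * (E m - E n) ^ 2 := by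
    have expand : ∑ n, ∑ m, T n m * p0 m * E m * (E m - E n)
        - (1 / 2) * ∑ n, ∑ m, T n m * p0 m * (E m - E n) ^ 2
        = (1 / 2) * ((∑ n, ∑ m, T n m * p0 m * E m ^ 2)
            - ∑ n, ∑ m, T n m * p0 m * E n ^ 2) := by
      simp only [Finset.mul_sum, ← Finset.sum_sub_distrib]
      refine Finset.sum_congr rfl fun n _ => Finset.sum_congr rfl fun m _ => by ring
    have : ∑ n, ∑ m, T n m * p0 m * E m * (E m - E n)
        - (1 / 2) * ∑ n, ∑ m, T n m * p0 m * (E m - E n) ^ 2 = 0 := by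
      rw [expand, hA, hC]; ring
    linarith
  have split : ∑ n, ∑ m, (T n m * p0 m + T m n * p0 n) * (E m - E n) ^ 2
      = 2 * ∑ n, ∑ m, T n m * p0 m * (E m - E n) ^ 2 := by
    have : ∑ n, ∑ m, (T n m * p0 m + T m n * p0 n) * (E m - E n) ^ 2
        = (∑ n, ∑ m, T n m * p0 m * (E m - E n) ^ 2)
          + ∑ n, ∑ m, T m n * p0 n * (E m - E n) ^ 2 := by
      simp only [← Finset.sum_add_distrib]
      refine Finset.sum_congr rfl fun n _ => Finset.sum_congr rfl fun m _ => by ring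
    rw [this, hswap]; ring
  constructor
  · rw [key, split]; ring
  · intro hβ
    rw [key]
    have : 0 ≤ ∑ n, ∑ m, T n m * p0 m * (E m - E n) ^ 2 :=
      Finset.sum_nonneg fun n _ => Finset.sum_nonneg fun m _ => by
        have := hT0 n m; have := hp0nn m; positivity
    positivity
end

section
/- Let N be a finite set, E : N → ℝ, d : N → ℕ positive, β ∈ ℝ, and p the Gibbs distribution at inverse temperature β. Let t be an N × N real matrix with all column sums zero, and for small ε let q^ε := p + ε t p (the first-order action of T = I + ε t). Then the first-order changes of entropy and energy satisfy the Clausius equality at first order: d/dε|_{ε=0} S(q^ε) = β · d/dε|_{ε=0} E(q^ε), where S(r) = −∑_n r_n log(r_n/d_n) and E(r) = ∑_n r_n E_n. -/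
open Finset Real

/-- Clausius equality at first order (weak-coupling limit). -/
theorem clausius_equality_first_order {N : Type*} [Fintype N] [Nonempty N]
    (E : N → ℝ) (d : N → ℕ) (hd : ∀ n, 0 < d n) (β : ℝ)
    (p : N → ℝ)
    (hp : ∀ n, p n = (d n : ℝ) * Real.exp (-β * E n) /
      (∑ k, (d k : ℝ) * Real.exp (-β * E k)))
    (t : N → N → ℝ) (ht : ∀ n, ∑ m, t m n = 0)
    (q : ℝ → N → ℝ)
    (hq : ∀ ε n, q ε n = p n + ε * ∑ m, t n m * p m) :
    deriv (fun ε => -(∑ n, q ε n * Real.log (q ε n / (d n : ℝ)))) 0 =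
      β * deriv (fun ε => ∑ n, q ε n * E n) 0 := by
  set Z : ℝ := ∑ k, (d k : ℝ) * Real.exp (-β * E k) with hZ
  have hZpos : 0 < Z := Finset.sum_pos (fun k _ =>
    mul_pos (by exact_mod_cast hd k) (Real.exp_pos _)) Finset.univ_nonempty
  have hppos : ∀ n, 0 < p n := fun n => by
    rw [hp n]
    exact div_pos (mul_pos (by exact_mod_cast hd n) (Real.exp_pos _)) hZpos
  set c : N → ℝ := fun n => ∑ m, t n m * p m with hc
  have hcsum : ∑ n, c n = 0 := by
    rw [Finset.sum_comm]
    simp only [← Finset.sum_mul, ht, zero_mul, Finset.sum_const_zero]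
  -- derivative lemma per term
  have hderiv1 : ∀ n : N, HasDerivAt (fun ε : ℝ => q ε n * Real.log (q ε n / (d n : ℝ)))
      (c n * Real.log (p n / (d n : ℝ)) + c n) 0 := by
    intro n
    have hq' : (fun ε : ℝ => q ε n) = fun ε => p n + ε * c n := by
      funext ε; exact hq ε n
    have hu : HasDerivAt (fun ε : ℝ => p n + ε * c n) (c n) 0 := by
      simpa using (hasDerivAt_id (0:ℝ)).mul_const (c n) |>.const_add (p n)
    have hu0 : p n + 0 * c n = p n := by ring
    have hdn : (0:ℝ) < (d n : ℝ) := by exact_mod_cast hd n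
    have hv : HasDerivAt (fun ε : ℝ => (p n + ε * c n) / (d n : ℝ)) (c n / (d n : ℝ)) 0 :=
      hu.div_const _
    have hlog : HasDerivAt (fun ε : ℝ => Real.log ((p n + ε * c n) / (d n : ℝ)))
        ((c n / (d n : ℝ)) / ((p n + 0 * c n) / (d n : ℝ))) 0 := by
      apply hv.log
      rw [hu0]
      exact (div_pos (hppos n) hdn).ne'
    have hprod := hu.mul hlog
    rw [hu0] at hprod hlog
    have hsimp : c n * Real.log (p n / (d n : ℝ)) + p n * (c n / (d n : ℝ) / (p n / (d n : ℝ)))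
        = c n * Real.log (p n / (d n : ℝ)) + c n := by
      have h2 : p n * (c n / (d n : ℝ) / (p n / (d n : ℝ))) = c n := by
        field_simp
        exact mul_div_cancel_left₀ _ (hppos n).ne'
      rw [h2]
    rw [hsimp] at hprod
    have hfe : (fun ε : ℝ => q ε n * Real.log (q ε n / (d n : ℝ)))
        = fun ε => (p n + ε * c n) * Real.log ((p n + ε * c n) / (d n : ℝ)) := by
      funext ε; rw [hq ε n]
    rw [hfe]
    exact hprod
  have hderiv2 : ∀ n : N, HasDerivAt (fun ε : ℝ => q ε n * E n) (c n * E n) 0 := by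
    intro n
    have hq' : (fun ε : ℝ => q ε n) = fun ε => p n + ε * c n := by
      funext ε; exact hq ε n
    have hu : HasDerivAt (fun ε : ℝ => p n + ε * c n) (c n) 0 := by
      simpa using (hasDerivAt_id (0:ℝ)).mul_const (c n) |>.const_add (p n)
    have hfe : (fun ε : ℝ => q ε n * E n) = fun ε => (p n + ε * c n) * E n := by
      funext ε; rw [hq ε n]
    rw [hfe]
    exact hu.mul_const _
  have hS : HasDerivAt (fun ε : ℝ => -(∑ n, q ε n * Real.log (q ε n / (d n : ℝ))))
      (-(∑ n, (c n * Real.log (p n / (d n : ℝ)) + c n))) 0 := by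
    exact (HasDerivAt.fun_sum (fun n _ => hderiv1 n)).neg
  have hE : HasDerivAt (fun ε : ℝ => ∑ n, q ε n * E n) (∑ n, c n * E n) 0 :=
    HasDerivAt.fun_sum (fun n _ => hderiv2 n)
  rw [hS.deriv, hE.deriv]
  have hlogp : ∀ n, Real.log (p n / (d n : ℝ)) = -β * E n - Real.log Z := by
    intro n
    have hdn : (0:ℝ) < (d n : ℝ) := by exact_mod_cast hd n
    rw [hp n]
    have h1 : (d n : ℝ) * Real.exp (-β * E n) / Z / (d n : ℝ) = Real.exp (-β * E n) / Z := by
      field_simp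
    rw [h1, Real.log_div (Real.exp_ne_zero _) hZpos.ne', Real.log_exp]
  have : ∑ n, (c n * Real.log (p n / (d n : ℝ)) + c n)
      = -β * ∑ n, c n * E n - Real.log Z * ∑ n, c n + ∑ n, c n := by
    rw [Finset.sum_add_distrib]
    congr 1
    rw [Finset.mul_sum, Finset.mul_sum, ← Finset.sum_sub_distrib]
    apply Finset.sum_congr rfl
    intro n _
    rw [hlogp n]; ring
  rw [this, hcsum]
  ring
end
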